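/- For all integers k ≥ 2 and m ≥ k−1, every m-dimensional volume k-metric is a binom(m, k−1)-dimensional coboundary k-metric with respect to the ℓ_2 norm: V_k^m ⊆ C_{k,2}^{m′} with m′ = binom(m, k−1). In particular every volume k-metric is a coboundary k-metric with respect to the ℓ_2 norm, and hence a strong pseudo k-metric. -/

import Mathlib

open scoped BigOperators

/-- An alternating real-valued function on `j`-tuples of `X`
(a `(j-1)`-dimensional chain on the complete complex on `X`). -/
def AltChain {X : Type*} {j : ℕ} (α : (Fin j → X) → ℝ) : Prop :=
  ∀ (π : Equiv.Perm (Fin j)) (x : Fin j → X),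
    α (x ∘ π) = ((Equiv.Perm.sign π : ℤ) : ℝ) * α x

/-- The boundary operator: `(∂α)(y₁,…,y_j) = ∑_{x ∈ X} α(x, y₁, …, y_j)`. -/
noncomputable def bdry {X : Type*} [Fintype X] {j : ℕ}
    (α : (Fin (j + 1) → X) → ℝ) : (Fin j → X) → ℝ :=
  fun y => ∑ x : X, α (Fin.cons x y)

/-- The elementary chain `1_t`: value `sign π` on the reordering of `t` by `π`,
and `0` on all other tuples. -/
noncomputable def unitChain {X : Type*} [DecidableEq X] {j : ℕ} (t : Fin j → X) :
    (Fin j → X) → ℝ :=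
  fun s => ∑ π : Equiv.Perm (Fin j),
    if s = t ∘ π then ((Equiv.Perm.sign π : ℤ) : ℝ) else 0

/-- The coboundary operator:
`(δf)(x₁,…,x_{j+2}) = ∑ᵢ (-1)^(i+1) f(x₁,…,x̂ᵢ,…,x_{j+2})` (`0`-indexed sign `(-1)^i`). -/
noncomputable def cobdry {X : Type*} {j : ℕ}
    (f : (Fin (j + 1) → X) → ℝ) : (Fin (j + 2) → X) → ℝ :=
  fun x => ∑ i : Fin (j + 2), (-1 : ℝ) ^ (i : ℕ) * f (x ∘ i.succAbove)

/-- A pseudo metric of arity `K` (a pseudo `K`-metric): nonnegative, vanishing on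
non-injective tuples, permutation invariant, satisfying the simplex inequality. -/
structure IsPseudoMetric {X : Type*} (K : ℕ) (d : (Fin K → X) → ℝ) : Prop where
  nonneg : ∀ x, 0 ≤ d x
  eq_zero : ∀ x, ¬ Function.Injective x → d x = 0
  perm : ∀ (π : Equiv.Perm (Fin K)) (x), d (x ∘ π) = d x
  simplex : ∀ (x : Fin K → X) (y : X),
    d x ≤ ∑ i : Fin K, d (Function.update x i y)

/-- A strong pseudo metric of arity `k + 1` (a strong pseudo `(k+1)`-metric).
The strong simplex inequality `d t ≤ ∑_τ |α(τ)| * d(τ)` (with the sum over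
`(k+1)`-element subsets `τ` of `X`, each evaluated on any fixed ordering of `τ`)
is stated in the equivalent form `(k+1)! * d t ≤ ∑_s |α(s)| * d(s)` with the sum
over all `(k+1)`-tuples `s`: since `α` is alternating and `d` is permutation
invariant, the summand depends only on the underlying set of `s` (it vanishes on
tuples with repeated entries), and each `(k+1)`-element subset has exactly
`(k+1)!` orderings. -/
structure IsStrongPseudoMetric {X : Type*} [Fintype X] [DecidableEq X] (k : ℕ)
    (d : (Fin (k + 1) → X) → ℝ) : Prop where
  nonneg : ∀ x, 0 ≤ d x
  eq_zero : ∀ x, ¬ Function.Injective x → d x = 0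
  perm : ∀ (π : Equiv.Perm (Fin (k + 1))) (x), d (x ∘ π) = d x
  strong_simplex : ∀ t : Fin (k + 1) → X, Function.Injective t →
    ∀ α : (Fin (k + 1) → X) → ℝ, AltChain α → bdry α = bdry (unitChain t) →
      ((k + 1).factorial : ℝ) * d t ≤ ∑ s : Fin (k + 1) → X, |α s| * d s

/-- `(X, d)` is a coboundary metric of arity `k + 2` in `m` dimensions with respect
to the norm `ν` on `ℝ^m`: there are chains `f 1, …, f m` on `(k+1)`-tuples (i.e.
`(k+2)-2`-dimensional chains for arity `k+2`) whose simultaneous coboundary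
realizes `d` on injective tuples, and `d` vanishes on non-injective tuples. -/
def IsCoboundaryMetric {X : Type*} (k m : ℕ) (ν : (Fin m → ℝ) → ℝ)
    (d : (Fin (k + 2) → X) → ℝ) : Prop :=
  ∃ f : Fin m → ((Fin (k + 1) → X) → ℝ),
    (∀ i, AltChain (f i)) ∧
    (∀ x, Function.Injective x → d x = ν (fun i => cobdry (f i) x)) ∧
    (∀ x, ¬ Function.Injective x → d x = 0)

/-- `ν` is a norm on `ℝ^m`. -/
structure IsNorm {m : ℕ} (ν : (Fin m → ℝ) → ℝ) : Prop where
  nonneg : ∀ x, 0 ≤ ν x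
  eq_zero_iff : ∀ x, ν x = 0 ↔ x = 0
  homog : ∀ (c : ℝ) (x), ν (c • x) = |c| * ν x
  triangle : ∀ x y, ν (x + y) ≤ ν x + ν y

/-- The `ℓ_p` norm on `ℝ^m` for real `p`. -/
noncomputable def lpNorm (p : ℝ) {m : ℕ} (x : Fin m → ℝ) : ℝ :=
  (∑ i, |x i| ^ p) ^ (1 / p)

/-- The `ℓ_1` norm on `ℝ^m`. -/
noncomputable def l1Norm {m : ℕ} (x : Fin m → ℝ) : ℝ := ∑ i, |x i|

/-- The `ℓ_2` (Euclidean) norm on `ℝ^m`. -/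
noncomputable def l2Norm {m : ℕ} (x : Fin m → ℝ) : ℝ := Real.sqrt (∑ i, x i ^ 2)

/-- The `ℓ_∞` norm on `ℝ^m` (the sup norm, which is the norm of `Fin m → ℝ`). -/
noncomputable def linfNorm {m : ℕ} (x : Fin m → ℝ) : ℝ := ‖x‖

/- The apex extension of `d` (of arity `K`), with the apex being
`none : Option X` (a new element not in `X`): on an injective `(K+1)`-tuple
containing the apex in position `i` it is `d` of the tuple with position `i`
removed, and it is `0` on all other tuples. -/
open Classical in
noncomputable def apexExt {X : Type*} {K : ℕ} (d : (Fin K → X) → ℝ) :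
    (Fin (K + 1) → Option X) → ℝ := fun x =>
  if h : Function.Injective x ∧ ∃ i, x i = none then
    d (fun j =>
      Option.get (x ((Classical.choose h.2).succAbove j))
        (by
          rw [Option.isSome_iff_ne_none]
          intro hnone
          exact Fin.succAbove_ne (Classical.choose h.2) j
            (h.1 (hnone.trans (Classical.choose_spec h.2).symm))))
  else 0

/-- The `K`-dimensional volume of the simplex with vertices `y 0, …, y K` in `ℝ^m`:
`(1/K!) * √(det (AᵀA))` where `A` is the `m × K` matrix with columns
`y i - y 0`, `i = 1, …, K`. -/
noncomputable def simplexVolume {m K : ℕ} (y : Fin (K + 1) → (Fin m → ℝ)) : ℝ :=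
  (1 / (K.factorial : ℝ)) *
    Real.sqrt
      (Matrix.det
        (Matrix.of fun i j : Fin K =>
          ∑ l : Fin m, (y i.succ l - y 0 l) * (y j.succ l - y 0 l)))

section Lemmas

variable {X : Type*}

lemma altChain_zero_of_not_injective {j : ℕ} {α : (Fin j → X) → ℝ} (hα : AltChain α)
    {s : Fin j → X} (hs : ¬ Function.Injective s) : α s = 0 := by
  simp only [Function.Injective, not_forall] at hs
  obtain ⟨a, b, hab, hne⟩ := hs
  have h1 : s ∘ (Equiv.swap a b : Equiv.Perm (Fin j)) = s := by
    funext w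
    rcases eq_or_ne w a with rfl | ha
    · simp [Equiv.swap_apply_left, hab]
    rcases eq_or_ne w b with rfl | hb
    · simp [Equiv.swap_apply_right, hab]
    · simp [Equiv.swap_apply_of_ne_of_ne ha hb]
  have h2 := hα (Equiv.swap a b) s
  rw [h1, Equiv.Perm.sign_swap hne] at h2
  have h3 : α s = -α s := by simpa using h2
  linarith

lemma altChain_unitChain [DecidableEq X] {j : ℕ} (t : Fin j → X) : AltChain (unitChain t) := by
  intro σ s
  unfold unitChain
  have key := Fintype.sum_equiv (Equiv.mulRight σ)
    (fun π : Equiv.Perm (Fin j) =>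
      if s ∘ σ = t ∘ (π * σ) then ((Equiv.Perm.sign (π * σ) : ℤ) : ℝ) else 0)
    (fun π : Equiv.Perm (Fin j) =>
      if s ∘ σ = t ∘ π then ((Equiv.Perm.sign π : ℤ) : ℝ) else 0)
    (fun π => rfl)
  rw [← key, Finset.mul_sum]
  refine Finset.sum_congr rfl fun π _ => ?_
  have hiff : s ∘ σ = t ∘ (π * σ) ↔ s = t ∘ π := by
    constructor
    · intro h; funext w
      have := congrFun h (σ.symm w)
      simpa using this
    · intro h; funext w
      simp [h, Equiv.Perm.mul_apply]
  beta_reduce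
  rw [if_congr hiff rfl rfl]
  split_ifs with h
  · simp only [Equiv.Perm.sign_mul]
    push_cast
    ring
  · simp

end Lemmas
lemma insertNth_eq_cons_comp_cycleRange {X : Type*} {n : ℕ} (i : Fin (n + 1)) (x : X)
    (y : Fin n → X) : i.insertNth x y = (Fin.cons x y) ∘ (i.cycleRange) := by
  funext w
  rcases eq_or_ne w i with rfl | hw
  · simp [Fin.insertNth_apply_same, Fin.cycleRange_self]
  · obtain ⟨j', rfl⟩ := Fin.exists_succAbove_eq hw
    simp [Fin.insertNth_apply_succAbove, Fin.cycleRange_succAbove]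

lemma pairing {X : Type*} [Fintype X] {j : ℕ} (β : (Fin (j + 2) → X) → ℝ) (hβ : AltChain β)
    (h : (Fin (j + 1) → X) → ℝ) :
    ∑ s : Fin (j + 2) → X, β s * cobdry h s
      = (j + 2 : ℝ) * ∑ y : Fin (j + 1) → X, bdry β y * h y := by
  have hterm : ∀ i : Fin (j + 2),
      (∑ s : Fin (j + 2) → X, β s * ((-1 : ℝ) ^ (i : ℕ) * h (s ∘ i.succAbove)))
        = ∑ y : Fin (j + 1) → X, bdry β y * h y := by
    intro i
    rw [← (Fin.insertNthEquiv (fun _ : Fin (j + 2) => X) i).sum_comp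
      (fun s => β s * ((-1 : ℝ) ^ (i : ℕ) * h (s ∘ i.succAbove)))]
    rw [Fintype.sum_prod_type]
    rw [Finset.sum_comm]
    refine Finset.sum_congr rfl fun y _ => ?_
    rw [bdry, Finset.sum_mul]
    refine Finset.sum_congr rfl fun x _ => ?_
    have he : (Fin.insertNthEquiv (fun _ : Fin (j + 2) => X) i) (x, y) = i.insertNth x y := rfl
    rw [he]
    have h1 : (i.insertNth x y) ∘ i.succAbove = y := by
      funext w; simp [Fin.insertNth_apply_succAbove]
    have h2 : β (i.insertNth x y) = (-1 : ℝ) ^ (i : ℕ) * β (Fin.cons x y) := by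
      rw [insertNth_eq_cons_comp_cycleRange, hβ (i.cycleRange) (Fin.cons x y),
        Fin.sign_cycleRange]
      push_cast
      ring
    rw [h1, h2]
    have hsq : ((-1 : ℝ) ^ (i : ℕ)) * ((-1 : ℝ) ^ (i : ℕ)) = 1 := by
      rw [← pow_add]; exact Even.neg_one_pow ⟨i, rfl⟩
    rw [mul_mul_mul_comm, hsq, one_mul]
  calc ∑ s : Fin (j + 2) → X, β s * cobdry h s
      = ∑ i : Fin (j + 2), ∑ s : Fin (j + 2) → X,
          β s * ((-1 : ℝ) ^ (i : ℕ) * h (s ∘ i.succAbove)) := by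
        unfold cobdry
        simp only [Finset.mul_sum]
        exact Finset.sum_comm
    _ = ∑ _i : Fin (j + 2), ∑ y : Fin (j + 1) → X, bdry β y * h y :=
        Finset.sum_congr rfl fun i _ => hterm i
    _ = (j + 2 : ℝ) * ∑ y : Fin (j + 1) → X, bdry β y * h y := by
        rw [Finset.sum_const, Finset.card_univ, Fintype.card_fin, nsmul_eq_mul]
        push_cast
        ring

lemma sum_unitChain_mul {X : Type*} [Fintype X] [DecidableEq X] {j : ℕ} (t : Fin (j + 2) → X)
    (w : (Fin (j + 2) → X) → ℝ) (hw : AltChain w) :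
    ∑ s : Fin (j + 2) → X, unitChain t s * w s = ((j + 2).factorial : ℝ) * w t := by
  unfold unitChain
  simp only [Finset.sum_mul]
  rw [Finset.sum_comm]
  have hterm : ∀ π : Equiv.Perm (Fin (j + 2)),
      (∑ s : Fin (j + 2) → X,
        (if s = t ∘ π then ((Equiv.Perm.sign π : ℤ) : ℝ) else 0) * w s) = w t := by
    intro π
    rw [Finset.sum_eq_single (t ∘ π)]
    · rw [if_pos rfl, hw π t]
      have : ((Equiv.Perm.sign π : ℤ) : ℝ) * ((Equiv.Perm.sign π : ℤ) : ℝ) = 1 := by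
        rcases Int.units_eq_one_or (Equiv.Perm.sign π) with hs | hs <;> rw [hs] <;> norm_num
      rw [← mul_assoc, this, one_mul]
    · intro s _ hne; rw [if_neg hne, zero_mul]
    · intro habs; exact absurd (Finset.mem_univ _) habs
  calc ∑ π : Equiv.Perm (Fin (j + 2)), ∑ s : Fin (j + 2) → X,
        (if s = t ∘ π then ((Equiv.Perm.sign π : ℤ) : ℝ) else 0) * w s
      = ∑ _π : Equiv.Perm (Fin (j + 2)), w t := Finset.sum_congr rfl fun π _ => hterm π
    _ = ((j + 2).factorial : ℝ) * w t := by
        rw [Finset.sum_const, Finset.card_univ, Fintype.card_perm, Fintype.card_fin,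
          nsmul_eq_mul]
lemma orderEmbOfFin_congr {m K : ℕ} {s₁ s₂ : Finset (Fin m)} (h₁ : s₁.card = K)
    (h₂ : s₂.card = K) (hs : s₁ = s₂) (b : Fin K) :
    s₁.orderEmbOfFin h₁ b = s₂.orderEmbOfFin h₂ b := by subst hs; rfl

noncomputable def injEquiv (K m : ℕ) :
    ({s : Finset (Fin m) // s.card = K} × Equiv.Perm (Fin K))
      ≃ {r : Fin K → Fin m // Function.Injective r} where
  toFun p := ⟨fun i => p.1.1.orderEmbOfFin p.1.2 (p.2 i),
    fun a b hab => p.2.injective ((p.1.1.orderEmbOfFin p.1.2).injective hab)⟩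
  invFun r :=
    ⟨⟨Finset.univ.image r.1, by
        rw [Finset.card_image_of_injective _ r.2, Finset.card_univ, Fintype.card_fin]⟩,
      Equiv.ofBijective
        (fun i => ((Finset.univ.image r.1).orderIsoOfFin (by
            rw [Finset.card_image_of_injective _ r.2, Finset.card_univ,
              Fintype.card_fin])).symm
          ⟨r.1 i, Finset.mem_image_of_mem r.1 (Finset.mem_univ i)⟩)
        (Finite.injective_iff_bijective.mp (fun a b hab =>
          r.2 (congrArg Subtype.val ((OrderIso.injective _) hab))))⟩
  left_inv p := by
    have hinj : Function.Injective (fun i => p.1.1.orderEmbOfFin p.1.2 (p.2 i)) :=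
      fun a b hab => p.2.injective ((p.1.1.orderEmbOfFin p.1.2).injective hab)
    have himage : Finset.univ.image (fun i => p.1.1.orderEmbOfFin p.1.2 (p.2 i)) = p.1.1 := by
      apply Finset.coe_injective
      rw [Finset.coe_image, Finset.coe_univ, Set.image_univ]
      have hr : Set.range (fun i => p.1.1.orderEmbOfFin p.1.2 (p.2 i))
          = Set.range (fun b => p.1.1.orderEmbOfFin p.1.2 b) :=
        Function.Surjective.range_comp p.2.surjective _
      rw [hr]
      exact p.1.1.range_orderEmbOfFin p.1.2
    refine Prod.ext (Subtype.ext himage) (Equiv.ext fun i => ?_)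
    apply (p.1.1.orderEmbOfFin p.1.2).injective
    show p.1.1.orderEmbOfFin p.1.2
        (((Finset.univ.image (fun i => p.1.1.orderEmbOfFin p.1.2 (p.2 i))).orderIsoOfFin (by
            rw [Finset.card_image_of_injective _ hinj, Finset.card_univ, Fintype.card_fin])).symm
          ⟨p.1.1.orderEmbOfFin p.1.2 (p.2 i), Finset.mem_image_of_mem _ (Finset.mem_univ i)⟩)
          = p.1.1.orderEmbOfFin p.1.2 (p.2 i)
    rw [← orderEmbOfFin_congr (by
        rw [Finset.card_image_of_injective _ hinj, Finset.card_univ, Fintype.card_fin])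
      p.1.2 himage]
    rw [← Finset.coe_orderIsoOfFin_apply]
    simp
  right_inv r := by
    refine Subtype.ext (funext fun i => ?_)
    show (Finset.univ.image r.1).orderEmbOfFin (by
          rw [Finset.card_image_of_injective _ r.2, Finset.card_univ, Fintype.card_fin])
        (((Finset.univ.image r.1).orderIsoOfFin (by
          rw [Finset.card_image_of_injective _ r.2, Finset.card_univ, Fintype.card_fin])).symm
          ⟨r.1 i, Finset.mem_image_of_mem r.1 (Finset.mem_univ i)⟩) = r.1 i
    rw [← Finset.coe_orderIsoOfFin_apply]
    simp

open Matrix in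
lemma cauchyBinet {K m : ℕ} (A : Matrix (Fin K) (Fin m) ℝ) :
    (A * Aᵀ).det = ∑ S : {s : Finset (Fin m) // s.card = K},
      (A.submatrix id (fun b => S.1.orderEmbOfFin S.2 b)).det ^ 2 := by
  classical
  set N : (Fin K → Fin m) → Matrix (Fin K) (Fin K) ℝ :=
    fun r => Matrix.of fun i j => A j (r i) with hN
  have hdet0 : ∀ r : Fin K → Fin m, ¬ Function.Injective r → (N r).det = 0 := by
    intro r hr
    simp only [Function.Injective, not_forall] at hr
    obtain ⟨a, b, hab, hne⟩ := hr
    exact Matrix.det_zero_of_row_eq hne (by funext j; simp [hN, hab])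
  have step1 : (A * Aᵀ).det
      = ∑ r : Fin K → Fin m, (∏ i, A i (r i)) * (N r).det := by
    have hrows : (A * Aᵀ) = Matrix.of fun i => ∑ l : Fin m, A i l • (fun j => A j l) := by
      ext i j
      simp [Matrix.mul_apply, Finset.sum_apply, mul_comm]
    have expand : ((Matrix.of fun i => ∑ l : Fin m, A i l • (fun j => A j l)) :
        Matrix (Fin K) (Fin K) ℝ).det
        = ∑ r : Fin K → Fin m,
            Matrix.detRowAlternating (fun i => A i (r i) • (fun j => A j (r i))) := by
      exact (Matrix.detRowAlternating :
        (Fin K → ℝ) [⋀^Fin K]→ₗ[ℝ] ℝ).toMultilinearMap.map_sum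
        (fun i l => A i l • (fun j : Fin K => A j l))
    rw [hrows, expand]
    refine Finset.sum_congr rfl fun r _ => ?_
    have hsmul : Matrix.detRowAlternating (fun i => A i (r i) • (fun j : Fin K => A j (r i)))
        = (∏ i, A i (r i)) • Matrix.detRowAlternating (fun i (j : Fin K) => A j (r i)) :=
      MultilinearMap.map_smul_univ _ _ _
    rw [hsmul, smul_eq_mul]
    rfl
  rw [step1]
  rw [← Finset.sum_filter_add_sum_filter_not Finset.univ (fun r => Function.Injective r)]
  have hzero : ∑ r ∈ Finset.univ.filter (fun r => ¬ Function.Injective r),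
      (∏ i, A i (r i)) * (N r).det = 0 := by
    refine Finset.sum_eq_zero fun r hr => ?_
    rw [hdet0 r (by simpa using (Finset.mem_filter.mp hr).2), mul_zero]
  rw [hzero, add_zero]
  have hsubtype : ∑ r ∈ Finset.univ.filter (fun r => Function.Injective r),
      (∏ i, A i (r i)) * (N r).det
      = ∑ r : {r : Fin K → Fin m // Function.Injective r},
          (∏ i, A i (r.1 i)) * (N r.1).det := by
    exact Finset.sum_subtype _ (fun r => by simp) _
  rw [hsubtype, ← (injEquiv K m).sum_comp
    (fun r : {r : Fin K → Fin m // Function.Injective r} =>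
      (∏ i, A i (r.1 i)) * (N r.1).det), Fintype.sum_prod_type]
  refine Finset.sum_congr rfl fun S _ => ?_
  set e : Fin K → Fin m := fun b => S.1.orderEmbOfFin S.2 b with he
  have hcoe : ∀ π : Equiv.Perm (Fin K),
      ((injEquiv K m) (S, π)).1 = fun i => e (π i) := fun π => funext fun i => rfl
  have hperm : ∀ π : Equiv.Perm (Fin K),
      (N (fun i => e (π i))).det = ((Equiv.Perm.sign π : ℤ) : ℝ) * (N e).det := by
    intro π
    have hsub : N (fun i => e (π i)) = (N e).submatrix π id := by
      ext i j; simp [hN]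
    rw [hsub, Matrix.det_permute]
  have hNe : (N e).det = (A.submatrix id e).det := by
    rw [← Matrix.det_transpose (A.submatrix id e)]
    congr 1
  calc ∑ π : Equiv.Perm (Fin K),
        (∏ i, A i (((injEquiv K m) (S, π)).1 i)) * (N ((injEquiv K m) (S, π)).1).det
      = (∑ π : Equiv.Perm (Fin K),
          ((Equiv.Perm.sign π : ℤ) : ℝ) * ∏ i, A i (e (π i))) * (N e).det := by
        rw [Finset.sum_mul]
        refine Finset.sum_congr rfl fun π _ => ?_
        rw [hcoe π, hperm π]
        ring
    _ = (A.submatrix id e).det ^ 2 := by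
        rw [hNe]
        have hdetapp : (∑ π : Equiv.Perm (Fin K),
            ((Equiv.Perm.sign π : ℤ) : ℝ) * ∏ i, A i (e (π i))) = (A.submatrix id e).det := by
          rw [← Matrix.det_transpose (A.submatrix id e), Matrix.det_apply]
          refine Finset.sum_congr rfl fun π _ => ?_
          simp only [Matrix.transpose_apply, Matrix.submatrix_apply, id_eq]
          simp only [Units.smul_def, zsmul_eq_mul]
        rw [hdetapp, sq]
/-- Row-reduction: determinant of a matrix whose first column is all ones equals the
determinant of the difference matrix. -/
lemma det_bordered {K : ℕ} (v : Fin (K + 1) → Fin K → ℝ) :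
    (Matrix.of fun i : Fin (K + 1) => Fin.cons 1 (v i) : Matrix (Fin (K + 1)) (Fin (K + 1)) ℝ).det
      = (Matrix.of fun a b : Fin K => v a.succ b - v 0 b).det := by
  set B : Matrix (Fin (K + 1)) (Fin (K + 1)) ℝ :=
    Matrix.of fun i : Fin (K + 1) => Fin.cons 1 (v i) with hB
  set B' : Matrix (Fin (K + 1)) (Fin (K + 1)) ℝ :=
    Matrix.of fun i j => if i = 0 then B 0 j else B i j - B 0 j with hB'
  have h1 : B.det = B'.det := by
    refine Matrix.det_eq_of_forall_row_eq_smul_add_const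
      (fun i => if i = 0 then 0 else 1) 0 (if_pos rfl) (fun i j => ?_)
    rcases eq_or_ne i 0 with rfl | hi
    · simp [hB']
    · simp only [hB', Matrix.of_apply, if_neg hi, eq_self_iff_true, if_true]
      ring
  rw [h1, Matrix.det_succ_column_zero]
  have hcol : ∀ i : Fin (K + 1), B' i 0 = if i = 0 then 1 else 0 := by
    intro i
    rcases eq_or_ne i 0 with rfl | hi
    · simp [hB', hB]
    · simp [hB', hB, if_neg hi]
  rw [Finset.sum_eq_single 0]
  · rw [hcol 0, if_pos rfl]
    simp only [Fin.val_zero, pow_zero, one_mul, mul_one]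
    congr 1
  · intro i _ hi
    rw [hcol i, if_neg hi, mul_zero, zero_mul]
  · intro h; exact absurd (Finset.mem_univ _) h

/-- Cofactor expansion: the coboundary of the minor chain is the bordered determinant. -/
lemma cobdry_eq_bordered {X : Type*} {k : ℕ} (v : X → Fin (k + 1) → ℝ) (x : Fin (k + 2) → X) :
    cobdry (fun z : Fin (k + 1) → X =>
        (Matrix.of fun a b : Fin (k + 1) => v (z a) b).det) x
      = (Matrix.of fun i : Fin (k + 2) => Fin.cons 1 (v (x i)) :
          Matrix (Fin (k + 2)) (Fin (k + 2)) ℝ).det := by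
  rw [Matrix.det_succ_column_zero]
  unfold cobdry
  refine Finset.sum_congr rfl fun i _ => ?_
  simp only [Matrix.of_apply, Fin.cons_zero, mul_one]
  congr 1
lemma cobdry_sum {X : Type*} {j M : ℕ} (w : Fin M → ℝ) (F : Fin M → ((Fin (j + 1) → X) → ℝ)) :
    cobdry (fun z => ∑ i, w i * F i z) = fun x => ∑ i, w i * cobdry (F i) x := by
  funext x
  unfold cobdry
  calc ∑ a : Fin (j + 2), (-1 : ℝ) ^ (a : ℕ) * ∑ i, w i * F i (x ∘ a.succAbove)
      = ∑ a : Fin (j + 2), ∑ i, w i * ((-1 : ℝ) ^ (a : ℕ) * F i (x ∘ a.succAbove)) := by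
        refine Finset.sum_congr rfl fun a _ => ?_
        rw [Finset.mul_sum]
        exact Finset.sum_congr rfl fun i _ => by ring
    _ = ∑ i, ∑ a : Fin (j + 2), w i * ((-1 : ℝ) ^ (a : ℕ) * F i (x ∘ a.succAbove)) :=
        Finset.sum_comm
    _ = ∑ i, w i * ∑ a : Fin (j + 2), (-1 : ℝ) ^ (a : ℕ) * F i (x ∘ a.succAbove) := by
        refine Finset.sum_congr rfl fun i _ => ?_
        rw [Finset.mul_sum]

lemma cobdry_smul {X : Type*} {j : ℕ} (c : ℝ) (F : (Fin (j + 1) → X) → ℝ) :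
    cobdry (fun z => c * F z) = fun x => c * cobdry F x := by
  funext x
  unfold cobdry
  rw [Finset.mul_sum]
  exact Finset.sum_congr rfl fun i _ => by ring

lemma signcast_mul_self {n : ℕ} (π : Equiv.Perm (Fin n)) :
    ((Equiv.Perm.sign π : ℤ) : ℝ) * ((Equiv.Perm.sign π : ℤ) : ℝ) = 1 := by
  rcases Int.units_eq_one_or (Equiv.Perm.sign π) with hs | hs <;> rw [hs] <;> norm_num

lemma abs_sum_mul_le_sqrt_mul_sqrt {M : ℕ} (a b : Fin M → ℝ) :
    |∑ i, a i * b i| ≤ Real.sqrt (∑ i, a i ^ 2) * Real.sqrt (∑ i, b i ^ 2) := by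
  have h := Finset.sum_mul_sq_le_sq_mul_sq Finset.univ a b
  have h2 : |∑ i, a i * b i| = Real.sqrt ((∑ i, a i * b i) ^ 2) :=
    (Real.sqrt_sq_eq_abs _).symm
  rw [h2, ← Real.sqrt_mul (Finset.sum_nonneg fun i _ => sq_nonneg (a i))]
  exact Real.sqrt_le_sqrt h
/-- for `m ≥ k + 1`, every `m`-dimensional volume metric of arity
`k + 2` is a `binom(m, k+1)`-dimensional coboundary metric with respect to the
`ℓ_2` norm; in particular it is a strong pseudo metric. -/
theorem stmt_15 (k m : ℕ) (hm : k + 1 ≤ m) {X : Type*} [Fintype X] [DecidableEq X]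
    (g : X → (Fin m → ℝ)) (d : (Fin (k + 2) → X) → ℝ)
    (hd : ∀ x : Fin (k + 2) → X,
      d x = simplexVolume (m := m) (K := k + 1) fun i => g (x i)) :
    IsCoboundaryMetric k (m.choose (k + 1)) l2Norm d ∧
      IsStrongPseudoMetric (k + 1) d := by
  classical
  have hcard : Fintype.card {s : Finset (Fin m) // s.card = k + 1} = m.choose (k + 1) := by
    rw [Fintype.card_finset_len, Fintype.card_fin]
  set E : {s : Finset (Fin m) // s.card = k + 1} ≃ Fin (m.choose (k + 1)) :=
    Fintype.equivFinOfCardEq hcard with hE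
  set c : ℝ := 1 / ((k + 1).factorial : ℝ) with hc
  have hcpos : 0 < c := by
    rw [hc]
    positivity
  set emb : Fin (m.choose (k + 1)) → Fin (k + 1) → Fin m :=
    fun i b => (E.symm i).1.orderEmbOfFin (E.symm i).2 b with hemb
  set f : Fin (m.choose (k + 1)) → ((Fin (k + 1) → X) → ℝ) := fun i z =>
    c * (Matrix.of fun a b : Fin (k + 1) => g (z a) (emb i b)).det with hf
  set D : Fin (m.choose (k + 1)) → (Fin (k + 2) → X) → ℝ := fun i x =>
    (Matrix.of fun a : Fin (k + 2) => Fin.cons 1 (fun b => g (x a) (emb i b)) :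
      Matrix (Fin (k + 2)) (Fin (k + 2)) ℝ).det with hD
  have hfalt : ∀ i, AltChain (f i) := by
    intro i π z
    show c * _ = _ * (c * _)
    have hsub : (Matrix.of fun a b : Fin (k + 1) => g ((z ∘ π) a) (emb i b))
        = (Matrix.of fun a b : Fin (k + 1) => g (z a) (emb i b)).submatrix π id := by
      ext a b; rfl
    rw [hsub, Matrix.det_permute]
    push_cast
    ring
  have hcob : ∀ i (x : Fin (k + 2) → X), cobdry (f i) x = c * D i x := by
    intro i x
    have h1 : f i = fun z => c * (fun z : Fin (k + 1) → X =>
        (Matrix.of fun a b : Fin (k + 1) => g (z a) (emb i b)).det) z := rfl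
    rw [h1, cobdry_smul c (fun z : Fin (k + 1) → X =>
      (Matrix.of fun a b : Fin (k + 1) => g (z a) (emb i b)).det)]
    beta_reduce
    rw [cobdry_eq_bordered (fun p b => g p (emb i b)) x]
  have hDperm : ∀ i (π : Equiv.Perm (Fin (k + 2))) (x : Fin (k + 2) → X),
      D i (x ∘ π) = ((Equiv.Perm.sign π : ℤ) : ℝ) * D i x := by
    intro i π x
    show Matrix.det _ = _ * Matrix.det _
    have hsub : (Matrix.of fun a : Fin (k + 2) => Fin.cons 1 (fun b => g ((x ∘ π) a) (emb i b)) :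
        Matrix (Fin (k + 2)) (Fin (k + 2)) ℝ)
        = (Matrix.of fun a : Fin (k + 2) =>
            Fin.cons 1 (fun b => g (x a) (emb i b))).submatrix π id := by
      ext a b; rfl
    rw [hsub, Matrix.det_permute]
  have hDzero : ∀ i (x : Fin (k + 2) → X), ¬ Function.Injective x → D i x = 0 := by
    intro i x hx
    simp only [Function.Injective, not_forall] at hx
    obtain ⟨a, b, hab, hne⟩ := hx
    have hfun : (fun b' => g (x a) (emb i b')) = fun b' => g (x b) (emb i b') := by
      rw [hab]
    have hrow : (Fin.cons (1 : ℝ) (fun b' => g (x a) (emb i b')) : Fin (k + 2) → ℝ)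
        = (Fin.cons (1 : ℝ) (fun b' => g (x b) (emb i b')) : Fin (k + 2) → ℝ) := by
      rw [hfun]
    exact Matrix.det_zero_of_row_eq hne hrow
  -- the master identity
  have master : ∀ x : Fin (k + 2) → X, d x = l2Norm (fun i => cobdry (f i) x) := by
    intro x
    rw [hd x]
    unfold simplexVolume l2Norm
    beta_reduce
    set A : Matrix (Fin (k + 1)) (Fin m) ℝ :=
      Matrix.of fun a l => g (x a.succ) l - g (x 0) l with hA
    have hgram : (Matrix.of fun i j : Fin (k + 1) =>
        ∑ l : Fin m, (g (x i.succ) l - g (x 0) l) * (g (x j.succ) l - g (x 0) l))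
        = A * A.transpose := by
      ext i j
      simp [hA, Matrix.mul_apply]
    rw [hgram, cauchyBinet A, ← hc]
    have hminor : ∀ S : {s : Finset (Fin m) // s.card = k + 1},
        (A.submatrix id (fun b => S.1.orderEmbOfFin S.2 b)).det = D (E S) x := by
      intro S
      have h2 : D (E S) x = (Matrix.of fun a b : Fin (k + 1) =>
          g (x a.succ) (emb (E S) b) - g (x 0) (emb (E S) b)).det :=
        det_bordered (fun (a : Fin (k + 2)) (b : Fin (k + 1)) => g (x a) (emb (E S) b))
      rw [h2]
      congr 1
      ext a b
      simp only [Matrix.submatrix_apply, Matrix.of_apply, hA, id_eq, hemb,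
        Equiv.symm_apply_apply]
    have hre : (∑ S : {s : Finset (Fin m) // s.card = k + 1},
        (A.submatrix id (fun b => S.1.orderEmbOfFin S.2 b)).det ^ 2)
        = ∑ i, (D i x) ^ 2 := by
      rw [← E.sum_comp (fun i => (D i x) ^ 2)]
      exact Finset.sum_congr rfl fun S _ => by rw [hminor S]
    rw [hre]
    have hsq : ∀ i : Fin (m.choose (k + 1)), (cobdry (f i) x) ^ 2 = c ^ 2 * (D i x) ^ 2 := by
      intro i
      rw [hcob i x]
      ring
    calc c * Real.sqrt (∑ i, (D i x) ^ 2)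
        = Real.sqrt (c ^ 2) * Real.sqrt (∑ i, (D i x) ^ 2) := by
          rw [Real.sqrt_sq hcpos.le]
      _ = Real.sqrt (c ^ 2 * ∑ i, (D i x) ^ 2) := (Real.sqrt_mul (sq_nonneg c) _).symm
      _ = Real.sqrt (∑ i, (cobdry (f i) x) ^ 2) := by
          rw [Finset.mul_sum]
          congr 1
          exact (Finset.sum_congr rfl fun i _ => by rw [hsq i]).symm
  set G : (Fin (k + 2) → X) → Fin (m.choose (k + 1)) → ℝ := fun s i => cobdry (f i) s with hG
  have hds : ∀ s : Fin (k + 2) → X, d s = Real.sqrt (∑ i, G s i ^ 2) := fun s => master s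
  have hnonneg : ∀ x, 0 ≤ d x := fun x => by rw [hds x]; exact Real.sqrt_nonneg _
  have heqzero : ∀ x : Fin (k + 2) → X, ¬ Function.Injective x → d x = 0 := by
    intro x hx
    rw [hds x]
    have hz : (∑ i, G x i ^ 2) = 0 := Finset.sum_eq_zero fun i _ => by
      have : G x i = 0 := by
        show cobdry (f i) x = 0
        rw [hcob i x, hDzero i x hx, mul_zero]
      rw [this]
      norm_num
    rw [hz, Real.sqrt_zero]
  have hGperm : ∀ (π : Equiv.Perm (Fin (k + 2))) (s : Fin (k + 2) → X) i,
      G (s ∘ π) i = ((Equiv.Perm.sign π : ℤ) : ℝ) * G s i := by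
    intro π s i
    show cobdry (f i) (s ∘ π) = _ * cobdry (f i) s
    rw [hcob i, hcob i, hDperm i π s]
    ring
  have hperm : ∀ (π : Equiv.Perm (Fin (k + 2))) (x : Fin (k + 2) → X), d (x ∘ π) = d x := by
    intro π x
    rw [hds, hds]
    congr 1
    refine Finset.sum_congr rfl fun i _ => ?_
    rw [hGperm π x i]
    have h2 : ((Equiv.Perm.sign π : ℤ) : ℝ) ^ 2 = 1 := by
      rw [sq, signcast_mul_self]
    calc (((Equiv.Perm.sign π : ℤ) : ℝ) * G x i) ^ 2
        = ((Equiv.Perm.sign π : ℤ) : ℝ) ^ 2 * G x i ^ 2 := by ring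
      _ = G x i ^ 2 := by rw [h2, one_mul]
  refine ⟨⟨f, hfalt, fun x _ => master x, heqzero⟩, ?_, heqzero, hperm, ?_⟩
  · exact hnonneg
  -- strong simplex inequality
  intro t ht α hα hbd
  set h : (Fin (k + 1) → X) → ℝ := fun y => ∑ i, G t i * f i y with hh
  have hcobh : cobdry h = fun s => ∑ i, G t i * G s i := cobdry_sum (G t) f
  have hwalt : AltChain (cobdry h) := by
    intro π s
    rw [hcobh]
    beta_reduce
    rw [Finset.mul_sum]
    refine Finset.sum_congr rfl fun i _ => ?_
    rw [hGperm π s i]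
    ring
  have e1 := pairing (j := k) α hα h
  have e2 := pairing (j := k) (unitChain t) (altChain_unitChain t) h
  have e3 := sum_unitChain_mul (j := k) t (cobdry h) hwalt
  have key : ∑ s : Fin (k + 2) → X, α s * cobdry h s
      = ((k + 2).factorial : ℝ) * cobdry h t := by
    rw [e1, hbd, ← e2, e3]
  have hsum_nonneg : 0 ≤ ∑ s : Fin (k + 2) → X, |α s| * d s :=
    Finset.sum_nonneg fun s _ => mul_nonneg (abs_nonneg _) (hnonneg s)
  have hdt2 : cobdry h t = d t ^ 2 := by
    rw [hcobh]
    beta_reduce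
    rw [hds t, Real.sq_sqrt (Finset.sum_nonneg fun i _ => sq_nonneg _)]
    exact Finset.sum_congr rfl fun i _ => by rw [sq]
  have hbound : ∀ s : Fin (k + 2) → X, α s * cobdry h s ≤ |α s| * d s * d t := by
    intro s
    by_cases hs : Function.Injective s
    · have h1 : α s * cobdry h s ≤ |α s| * |cobdry h s| := by
        rw [← abs_mul]
        exact le_abs_self _
      have h2 : |cobdry h s| ≤ d s * d t := by
        rw [hcobh]
        beta_reduce
        have hcomm : (∑ i, G t i * G s i) = ∑ i, G s i * G t i :=
          Finset.sum_congr rfl fun i _ => mul_comm _ _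
        rw [hcomm, hds s, hds t]
        exact abs_sum_mul_le_sqrt_mul_sqrt (G s) (G t)
      calc α s * cobdry h s ≤ |α s| * |cobdry h s| := h1
        _ ≤ |α s| * (d s * d t) := mul_le_mul_of_nonneg_left h2 (abs_nonneg _)
        _ = |α s| * d s * d t := by ring
    · rw [altChain_zero_of_not_injective hα hs]
      rw [abs_zero, zero_mul, zero_mul, zero_mul]
  have main2 : ((k + 2).factorial : ℝ) * d t ^ 2
      ≤ (∑ s : Fin (k + 2) → X, |α s| * d s) * d t := by
    rw [← hdt2, ← key, Finset.sum_mul]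
    refine Finset.sum_le_sum fun s _ => ?_
    calc α s * cobdry h s ≤ |α s| * d s * d t := hbound s
      _ = |α s| * d s * d t := rfl
  rcases eq_or_lt_of_le (hnonneg t) with h0 | h0
  · rw [← h0, mul_zero]
    exact hsum_nonneg
  · have hrearr : (((k + 2).factorial : ℝ) * d t) * d t
        ≤ (∑ s : Fin (k + 2) → X, |α s| * d s) * d t := by
      calc (((k + 2).factorial : ℝ) * d t) * d t = ((k + 2).factorial : ℝ) * d t ^ 2 := by ring
        _ ≤ _ := main2
    exact le_of_mul_le_mul_right hrearr h0
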